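/- The Banach algebra c₀ of scalar sequences converging to zero, with pointwise operations and supremum norm, is weakly amenable: every bounded derivation D : c₀ → ℓ¹ (= c₀*) is inner, hence zero. -/

import Mathlib

set_option maxHeartbeats 1000000

open Filter Topology ContinuousLinearMap NormedSpace

/-- The topological dual of a seminormed space `E` (as in the older Mathlib). -/
abbrev NormedSpace.Dual (𝕜 : Type*) (E : Type*) [NontriviallyNormedField 𝕜]
    [SeminormedAddCommGroup E] [NormedSpace 𝕜 E] : Type _ := E →L[𝕜] 𝕜

noncomputable section ArensSetup

/-- The adjoint (transpose) of a continuous linear map between normed spaces. -/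
def adjCLM {E F : Type*} [SeminormedAddCommGroup E] [NormedSpace ℝ E]
    [SeminormedAddCommGroup F] [NormedSpace ℝ F] (T : E →L[ℝ] F) :
    Dual ℝ F →L[ℝ] Dual ℝ E :=
  (ContinuousLinearMap.compL ℝ E F ℝ).flip T

@[simp] theorem adjCLM_apply {E F : Type*} [SeminormedAddCommGroup E] [NormedSpace ℝ E]
    [SeminormedAddCommGroup F] [NormedSpace ℝ F] (T : E →L[ℝ] F) (g : Dual ℝ F) (x : E) :
    adjCLM T g x = g (T x) := rfl

/-- One-step Arens-type adjoint of a bounded bilinear map: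
`ext1 β g' e = g' ∘ (β e)`. -/
def ext1 {E F G : Type*} [SeminormedAddCommGroup E] [NormedSpace ℝ E]
    [SeminormedAddCommGroup F] [NormedSpace ℝ F] [SeminormedAddCommGroup G] [NormedSpace ℝ G]
    (β : E →L[ℝ] F →L[ℝ] G) : Dual ℝ G →L[ℝ] E →L[ℝ] Dual ℝ F :=
  ((ContinuousLinearMap.compL ℝ F G ℝ).flip.comp β).flip

@[simp] theorem ext1_apply {E F G : Type*} [SeminormedAddCommGroup E] [NormedSpace ℝ E]
    [SeminormedAddCommGroup F] [NormedSpace ℝ F] [SeminormedAddCommGroup G] [NormedSpace ℝ G]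
    (β : E →L[ℝ] F →L[ℝ] G) (g' : Dual ℝ G) (e : E) (f : F) :
    ext1 β g' e f = g' (β e f) := rfl

/-- Triple adjoint: the (first) Arens extension of a bounded bilinear map to the
second duals. -/
def ext3 {E F G : Type*} [SeminormedAddCommGroup E] [NormedSpace ℝ E]
    [SeminormedAddCommGroup F] [NormedSpace ℝ F] [SeminormedAddCommGroup G] [NormedSpace ℝ G]
    (β : E →L[ℝ] F →L[ℝ] G) :
    Dual ℝ (Dual ℝ E) →L[ℝ] Dual ℝ (Dual ℝ F) →L[ℝ] Dual ℝ (Dual ℝ G) :=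
  ext1 (ext1 (ext1 β))

variable (A : Type*) [NonUnitalNormedRing A] [NormedSpace ℝ A]
  [SMulCommClass ℝ A A] [IsScalarTower ℝ A A] [CompleteSpace A]

/-- The first (left) Arens product on `A**`: `⟨a''b'', a'⟩ = ⟨a'', b''a'⟩`. -/
def fArens : Dual ℝ (Dual ℝ A) →L[ℝ] Dual ℝ (Dual ℝ A) →L[ℝ] Dual ℝ (Dual ℝ A) :=
  ext3 (ContinuousLinearMap.mul ℝ A)

/-- The second (right) Arens product on `A**`: `⟨a''∘b'', a'⟩ = ⟨b'', a'∘a''⟩`. -/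
def sArens : Dual ℝ (Dual ℝ A) →L[ℝ] Dual ℝ (Dual ℝ A) →L[ℝ] Dual ℝ (Dual ℝ A) :=
  (ext3 (ContinuousLinearMap.mul ℝ A).flip).flip

/-- `A` is Arens regular when the two Arens products on `A**` coincide. -/
def ArensRegular : Prop := fArens A = sArens A

variable {A}

/-- Weak-star to weak continuity for a map from the dual of `E` into `F`. -/
def WStarToWCont {E F : Type*} [SeminormedAddCommGroup E] [NormedSpace ℝ E]
    [SeminormedAddCommGroup F] [NormedSpace ℝ F] (f : Dual ℝ E → F) : Prop :=
  Continuous fun x : WeakDual ℝ E => toWeakSpace ℝ F (f (WeakDual.toStrongDual x))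

variable (A)

/-- The second adjoint `T'' : A** → A**` of `T : A → A`. -/
def secondAdj (T : A →L[ℝ] A) : Dual ℝ (Dual ℝ A) →L[ℝ] Dual ℝ (Dual ℝ A) :=
  adjCLM (adjCLM T)

/-- Left action of `A` on `A*`: `⟨a·a', b⟩ = ⟨a', ba⟩`. -/
def dualLeft : A →L[ℝ] Dual ℝ A →L[ℝ] Dual ℝ A :=
  (ext1 (ContinuousLinearMap.mul ℝ A).flip).flip

/-- Right action of `A` on `A*`: `⟨a'·a, b⟩ = ⟨a', ab⟩`. -/
def dualRight : Dual ℝ A →L[ℝ] A →L[ℝ] Dual ℝ A :=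
  ext1 (ContinuousLinearMap.mul ℝ A)

/-- Left action of `A**` (first Arens product) on `A***`. -/
def dualLeft2 : Dual ℝ (Dual ℝ A) →L[ℝ] Dual ℝ (Dual ℝ (Dual ℝ A)) →L[ℝ]
    Dual ℝ (Dual ℝ (Dual ℝ A)) :=
  (ext1 (fArens A).flip).flip

/-- Right action of `A**` (first Arens product) on `A***`. -/
def dualRight2 : Dual ℝ (Dual ℝ (Dual ℝ A)) →L[ℝ] Dual ℝ (Dual ℝ A) →L[ℝ]
    Dual ℝ (Dual ℝ (Dual ℝ A)) :=
  ext1 (fArens A)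

end ArensSetup

section BimoduleSetup

set_option maxHeartbeats 1000000

open Filter Topology ContinuousLinearMap NormedSpace

/-- A Banach `A`-bimodule: bounded bilinear left and right actions satisfying the
usual compatibility axioms. -/
structure BanachBimodule (A X : Type*) [NonUnitalNormedRing A] [NormedSpace ℝ A]
    [SMulCommClass ℝ A A] [IsScalarTower ℝ A A]
    [NormedAddCommGroup X] [NormedSpace ℝ X] [CompleteSpace X] where
  l : A →L[ℝ] X →L[ℝ] X
  r : X →L[ℝ] A →L[ℝ] X
  l_mul : ∀ a b x, l (a * b) x = l a (l b x)
  r_mul : ∀ x a b, r (r x a) b = r x (a * b)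
  l_r : ∀ a x b, l a (r x b) = r (l a x) b

variable {A X : Type*} [NonUnitalNormedRing A] [NormedSpace ℝ A]
  [SMulCommClass ℝ A A] [IsScalarTower ℝ A A] [CompleteSpace A]
  [NormedAddCommGroup X] [NormedSpace ℝ X] [CompleteSpace X]

/-- Left action of `A` on `X*`: `⟨a·f, x⟩ = ⟨f, x·a⟩`. -/
noncomputable def modDualLeft (M : BanachBimodule A X) : A →L[ℝ] Dual ℝ X →L[ℝ] Dual ℝ X :=
  (ext1 M.r.flip).flip

/-- Right action of `A` on `X*`: `⟨f·a, x⟩ = ⟨f, a·x⟩`. -/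
noncomputable def modDualRight (M : BanachBimodule A X) : Dual ℝ X →L[ℝ] A →L[ℝ] Dual ℝ X :=
  ext1 M.l

/-- Left action of `A**` on `X**` (first Arens extension). -/
noncomputable def modL2 (M : BanachBimodule A X) :
    Dual ℝ (Dual ℝ A) →L[ℝ] Dual ℝ (Dual ℝ X) →L[ℝ] Dual ℝ (Dual ℝ X) :=
  ext3 M.l

/-- Right action of `A**` on `X**` (first Arens extension); `modR2 M x'' a'' = x''a''`. -/
noncomputable def modR2 (M : BanachBimodule A X) :
    Dual ℝ (Dual ℝ X) →L[ℝ] Dual ℝ (Dual ℝ A) →L[ℝ] Dual ℝ (Dual ℝ X) :=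
  ext3 M.r

/-- Left action of `A**` on `X***`: `⟨a''·x''', x''⟩ = ⟨x''', x''a''⟩`. -/
noncomputable def modL3 (M : BanachBimodule A X) :
    Dual ℝ (Dual ℝ A) →L[ℝ] Dual ℝ (Dual ℝ (Dual ℝ X)) →L[ℝ] Dual ℝ (Dual ℝ (Dual ℝ X)) :=
  (ext1 (modR2 M).flip).flip

/-- Right action of `A**` on `X***`: `⟨x'''·a'', x''⟩ = ⟨x''', a''x''⟩`. -/
noncomputable def modR3 (M : BanachBimodule A X) :
    Dual ℝ (Dual ℝ (Dual ℝ X)) →L[ℝ] Dual ℝ (Dual ℝ A) →L[ℝ] Dual ℝ (Dual ℝ (Dual ℝ X)) :=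
  ext1 (modL2 M)

end BimoduleSetup

section DerivationSetup

variable {B Y : Type*} [SeminormedAddCommGroup B] [NormedSpace ℝ B]
  [SeminormedAddCommGroup Y] [NormedSpace ℝ Y]

/-- `D` is a derivation with respect to the multiplication `m` and the module
actions `l`, `r`. -/
def IsDeriv (m : B →L[ℝ] B →L[ℝ] B) (l : B →L[ℝ] Y →L[ℝ] Y)
    (r : Y →L[ℝ] B →L[ℝ] Y) (D : B →L[ℝ] Y) : Prop :=
  ∀ a b, D (m a b) = l a (D b) + r (D a) b

/-- `D` is an inner derivation: `D a = a·y − y·a` for some fixed `y`. -/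
def IsInner (l : B →L[ℝ] Y →L[ℝ] Y) (r : Y →L[ℝ] B →L[ℝ] Y) (D : B →L[ℝ] Y) : Prop :=
  ∃ y, ∀ a, D a = l a y - r y a

/-- `D` is a `T-S`-derivation: `D(ab) = T(a)·D(b) + D(a)·S(b)`. -/
def IsTSDeriv (m : B →L[ℝ] B →L[ℝ] B) (l : B →L[ℝ] Y →L[ℝ] Y)
    (r : Y →L[ℝ] B →L[ℝ] Y) (T S : B →L[ℝ] B) (D : B →L[ℝ] Y) : Prop :=
  ∀ a b, D (m a b) = l (T a) (D b) + r (D a) (S b)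

/-- `D` is an inner `T-S`-derivation: `D a = T(a)·y − y·S(a)` for some fixed `y`. -/
def IsTSInner (l : B →L[ℝ] Y →L[ℝ] Y) (r : Y →L[ℝ] B →L[ℝ] Y)
    (T S : B →L[ℝ] B) (D : B →L[ℝ] Y) : Prop :=
  ∃ y, ∀ a, D a = l (T a) y - r y (S a)

end DerivationSetup


section Statements
set_option maxHeartbeats 1000000
open Filter Topology ContinuousLinearMap NormedSpace

/-- `c₀` is weakly amenable: every bounded derivation `D : c₀ → ℓ¹ = c₀*` is inner,
hence zero. -/
theorem c0_weaklyAmenable :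
    ∀ D : (ZeroAtInftyContinuousMap ℕ ℝ) →L[ℝ] Dual ℝ (ZeroAtInftyContinuousMap ℕ ℝ),
      IsDeriv (ContinuousLinearMap.mul ℝ (ZeroAtInftyContinuousMap ℕ ℝ)) (dualLeft (ZeroAtInftyContinuousMap ℕ ℝ)) (dualRight (ZeroAtInftyContinuousMap ℕ ℝ)) D →
      IsInner (dualLeft (ZeroAtInftyContinuousMap ℕ ℝ)) (dualRight (ZeroAtInftyContinuousMap ℕ ℝ)) D ∧ D = 0 := by
  intro D hD
  set A := ZeroAtInftyContinuousMap ℕ ℝ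
  -- the idempotent indicator sequences
  let e : ℕ → A := fun n =>
    ⟨⟨fun m => if m = n then 1 else 0, continuous_of_discreteTopology⟩, by
      rw [cocompact_eq_atTop (α := ℕ)]
      refine tendsto_nhds_of_eventually_eq ?_
      filter_upwards [Filter.eventually_gt_atTop n] with m hm
      simp [Nat.ne_of_gt hm]⟩
  have he2 : ∀ n m, (e n) m = if m = n then 1 else 0 := fun n m => rfl
  have he : ∀ n, e n * e n = e n := by
    intro n
    ext m
    show (e n) m * (e n) m = (e n) m
    rw [he2]
    by_cases h : m = n <;> simp [h]
  -- D vanishes on each idempotent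
  have hDe : ∀ n, D (e n) = 0 := by
    intro n
    have h1 := hD (e n) (e n)
    have h2 : ∀ x : A, D (e n) x = D (e n) (x * e n) + D (e n) (x * e n) := by
      intro x
      have hx : D (e n) x = D (e n) (x * e n) + D (e n) (e n * x) := by
        have : (ContinuousLinearMap.mul ℝ A) (e n) (e n) = e n * e n := rfl
        rw [this, he n] at h1
        calc D (e n) x = (dualLeft A (e n) (D (e n)) + dualRight A (D (e n)) (e n)) x := by
              rw [← h1]
          _ = D (e n) (x * e n) + D (e n) (e n * x) := rfl
      rw [hx, mul_comm (e n) x]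
    have h3 : ∀ x : A, D (e n) (x * e n) = 0 := by
      intro x
      have := h2 (x * e n)
      rw [mul_assoc, he n] at this
      linarith
    ext x
    have := h2 x
    rw [h3 x] at this
    simpa using this
  -- D is zero: finite linear combinations of the `e n` are dense
  have hD0 : D = 0 := by
    ext f g
    -- partial sums converge to f in norm
    set s : ℕ → A := fun N => ∑ k ∈ Finset.range N, f k • e k with hs
    have hDs : ∀ N, D (s N) = 0 := by
      intro N
      rw [hs]
      simp only [map_sum, map_smul, hDe, smul_zero, Finset.sum_const_zero]
    have hsum : ∀ (t : Finset ℕ) (m : ℕ),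
        ((∑ k ∈ t, f k • e k : A)) m = ∑ k ∈ t, f k * (e k) m := by
      intro t m
      induction t using Finset.cons_induction with
      | empty => simp; rfl
      | cons a t ha ih =>
        rw [Finset.sum_cons, Finset.sum_cons, ← ih]
        rfl
    have hcoord : ∀ N m, (s N) m = if m ∈ Finset.range N then f m else 0 := by
      intro N m
      rw [hs]
      show ((∑ k ∈ Finset.range N, f k • e k : A)) m = _
      rw [hsum]
      simp_rw [he2, mul_ite, mul_one, mul_zero]
      rw [Finset.sum_ite_eq (Finset.range N) m f]
    have htend : Filter.Tendsto s Filter.atTop (𝓝 f) := by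
      rw [Metric.tendsto_atTop]
      intro ε hε
      have hf : Filter.Tendsto (f : ℕ → ℝ) Filter.atTop (𝓝 0) := by
        have := zero_at_infty f
        rwa [cocompact_eq_atTop (α := ℕ)] at this
      obtain ⟨N₀, hN₀⟩ := (Metric.tendsto_atTop.mp hf) (ε / 2) (by linarith)
      refine ⟨N₀, fun N hN => ?_⟩
      have hb : ∀ m, |(s N - f) m| ≤ ε / 2 := by
        intro m
        have hd : (s N - f) m = (s N) m - f m := rfl
        rw [hd, hcoord N m]
        by_cases h : m ∈ Finset.range N
        · simp only [h, if_pos, sub_self, abs_zero]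
          linarith
        · simp only [h, if_neg, ite_false, zero_sub, abs_neg]
          have hm : m ≥ N₀ := le_trans hN (Nat.le_of_not_lt (by simpa using h))
          have := hN₀ m hm
          rw [Real.dist_eq, sub_zero] at this
          exact le_of_lt this
      have hnorm : ‖s N - f‖ ≤ ε / 2 := by
        rw [← ZeroAtInftyContinuousMap.norm_toBCF_eq_norm]
        exact (BoundedContinuousFunction.norm_le (by linarith)).2 hb
      rw [dist_eq_norm]
      linarith
    have h4 : Filter.Tendsto (fun N => D (s N)) Filter.atTop (𝓝 (D f)) :=
      (D.continuous.tendsto f).comp htend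
    simp only [hDs] at h4
    have h5 : D f = 0 := tendsto_nhds_unique (tendsto_const_nhds) h4 |>.symm
    rw [h5]
    rfl
  refine ⟨⟨0, fun a => ?_⟩, hD0⟩
  simp [hD0]

end Statements
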